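/- arXiv:math/0112265 — 8 statements merged into one kernel-verified Lean document; each statement's English description precedes it below -/
import Mathlib

section
/- If A ⊆ ℕ contains arithmetic progressions of all finite lengths (is an AP-set) and A is partitioned into finitely many parts, then at least one part contains arithmetic progressions of all finite lengths. -/
open Set Filter

/-- `A` contains arithmetic progressions of all finite lengths. -/
def IsAPSet (A : Set ℕ) : Prop :=
  ∀ k : ℕ, ∃ a d : ℕ, 0 < d ∧ ∀ i < k, a + i * d ∈ A

/-- The set of finite sums of distinct elements of `B`. -/
def FS (B : Set ℕ) : Set ℕ :=
  {n | ∃ F : Finset ℕ, F.Nonempty ∧ ↑F ⊆ B ∧ n = ∑ i ∈ F, i}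

/-- `S` is an IP-set: it contains `FS B` for some infinite `B`. -/
def IsIPSet (S : Set ℕ) : Prop :=
  ∃ B : Set ℕ, B.Infinite ∧ FS B ⊆ S

/-- `f` is finite-to-one on `C`. -/
def FinToOneOn (f : ℕ → ℕ) (C : Set ℕ) : Prop :=
  ∀ m : ℕ, (C ∩ f ⁻¹' {m}).Finite

/-- Finitary van der Waerden, by compactness from the infinitary version. -/
theorem vdw_finitary (k : ℕ) (κ : Type) [Finite κ] :
    ∃ N : ℕ, ∀ C : ℕ → κ, ∃ a d : ℕ, ∃ c : κ, 0 < d ∧ a + k * d ≤ N ∧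
      ∀ j < k, C (a + j * d) = c := by
  by_contra h
  push_neg at h
  choose CN hCN using h
  haveI : Fintype κ := Fintype.ofFinite κ
  set U : Ultrafilter ℕ := Filter.hyperfilter ℕ with hU
  -- limit coloring
  have hlim : ∀ m : ℕ, ∃ c : κ, {N | CN N m = c} ∈ U := by
    intro m
    have huniv : (⋃ c ∈ (Finset.univ : Finset κ), {N | CN N m = c}) ∈ U := by
      have : (⋃ c ∈ (Finset.univ : Finset κ), {N | CN N m = c}) = Set.univ := by
        ext N; simp
      rw [this]; exact univ_mem
    rcases (Ultrafilter.finite_biUnion_mem_iff (Finset.finite_toSet _)).mp huniv with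
      ⟨c, _, hc⟩
    exact ⟨c, hc⟩
  choose C hC using hlim
  -- nonempty κ needed? C exists since ℕ nonempty implies κ inhabited via C 0
  obtain ⟨a, ha, b, c, hmono⟩ :=
    Combinatorics.exists_mono_homothetic_copy (Finset.range k) C
  -- the set of N where all colors agree and N is large is in U
  have hbig : {N : ℕ | b + k * a ≤ N} ∈ U := by
    have := Nat.hyperfilter_le_atTop (Filter.eventually_ge_atTop (b + k * a))
    exact this
  have hinter : (⋂ j ∈ Finset.range k, {N | CN N (b + j * a) = c}) ∈ U := by
    refine (Filter.biInter_mem (Finset.finite_toSet _)).mpr ?_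
    intro j hj
    have hj' : j ∈ Finset.range k := hj
    have := hmono j hj'
    have heq : a • j + b = b + j * a := by
      simp [smul_eq_mul, Nat.mul_comm, Nat.add_comm]
    rw [heq] at this
    rw [← this]
    exact hC (b + j * a)
  have hne : ({N : ℕ | b + k * a ≤ N} ∩ ⋂ j ∈ Finset.range k,
      {N | CN N (b + j * a) = c}).Nonempty :=
    Ultrafilter.nonempty_of_mem (inter_mem hbig hinter)
  obtain ⟨N, hN1, hN2⟩ := hne
  obtain ⟨j, hjk, hjne⟩ := hCN N b a c ha hN1
  apply hjne
  have := Set.mem_iInter₂.mp hN2 j (Finset.mem_range.mpr hjk)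
  exact this

/-- For each `k`, some part contains a `k`-term AP. -/
theorem apSet_partition_aux (A : Set ℕ) (hA : IsAPSet A)
    (n : ℕ) (hn : 0 < n) (P : Fin n → Set ℕ) (hP : A = ⋃ i, P i) (k : ℕ) :
    ∃ i : Fin n, ∃ a d : ℕ, 0 < d ∧ ∀ j < k, a + j * d ∈ P i := by
  haveI : NeZero n := ⟨hn.ne'⟩
  obtain ⟨N, hN⟩ := vdw_finitary k (Fin n)
  obtain ⟨a0, d0, hd0, hAP⟩ := hA (N + 1)
  -- color indices
  have hch : ∀ m : ℕ, ∃ i : Fin n, a0 + m * d0 ∈ A → a0 + m * d0 ∈ P i := by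
    intro m
    by_cases hm : a0 + m * d0 ∈ A
    · rw [hP] at hm
      obtain ⟨i, hi⟩ := Set.mem_iUnion.mp hm
      exact ⟨i, fun _ => hi⟩
    · exact ⟨0, fun h => absurd h hm⟩
  choose C hCmem using hch
  obtain ⟨a, d, c, hd, hle, hmono⟩ := hN C
  refine ⟨c, a0 + a * d0, d * d0, Nat.mul_pos hd hd0, ?_⟩
  intro j hj
  have hidx : a + j * d < N + 1 := by
    have h1 : a + j * d < a + k * d := by
      have := Nat.mul_lt_mul_of_lt_of_le hj (le_refl d) hd
      omega
    omega
  have hmemA : a0 + (a + j * d) * d0 ∈ A := hAP _ hidx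
  have := hCmem (a + j * d) hmemA
  rw [hmono j hj] at this
  have harith : a0 + a * d0 + j * (d * d0) = a0 + (a + j * d) * d0 := by ring
  rw [harith]
  exact this

/-- van der Waerden: if an AP-set is partitioned into finitely many parts,
one of the parts is an AP-set. -/
theorem apSet_partition (A : Set ℕ) (hA : IsAPSet A)
    (n : ℕ) (P : Fin n → Set ℕ) (hP : A = ⋃ i, P i) :
    ∃ i, IsAPSet (P i) := by
  rcases Nat.eq_zero_or_pos n with hn | hn
  · subst hn
    exfalso
    obtain ⟨a, d, hd, hmem⟩ := hA 1
    have : a + 0 * d ∈ A := hmem 0 Nat.one_pos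
    rw [hP] at this
    simp at this
  · have h := fun k => apSet_partition_aux A hA n hn P hP k
    choose f hf using h
    obtain ⟨i, hi⟩ := Finite.exists_infinite_fiber f
    refine ⟨i, ?_⟩
    intro k
    have hinf : (f ⁻¹' {i}).Infinite := Set.infinite_coe_iff.mp hi
    obtain ⟨k', hk'mem, hkk'⟩ := hinf.exists_gt k
    obtain ⟨a, d, hd, hmem⟩ := hf k'
    have hfi : f k' = i := hk'mem
    rw [hfi] at hmem
    exact ⟨a, d, hd, fun j hj => hmem j (hj.trans hkk')⟩
end

section
/- The collection I_AP of subsets of ℕ that are not AP-sets forms a proper ideal on ℕ: it is closed under subsets, closed under finite unions, contains all finite sets, and does not contain ℕ itself. -/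
open Set Filter

open Combinatorics in
/-- A finite van der Waerden theorem with an explicit bound, for 2 colors. -/
theorem finite_vdw (k : ℕ) : ∃ N : ℕ, ∀ C : ℕ → Bool,
    ∃ a b : ℕ, ∃ c : Bool, 0 < a ∧ ∀ s < k, a * s + b < N ∧ C (a * s + b) = c := by
  obtain ⟨ι, _inst, hι⟩ := Line.exists_mono_in_high_dimension (Fin (k + 1)) Bool
  refine ⟨Fintype.card ι * (k + 1) * 2 + 1, fun C => ?_⟩
  classical
  obtain ⟨l, c, hl⟩ := hι fun v => C <| ∑ i, (v i : ℕ)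
  set s : Finset ι := Finset.univ.filter (fun i => l.idxFun i = none) with hs
  set b : ℕ := ∑ i ∈ sᶜ, ((l.idxFun i).map Fin.val).getD 0 with hb
  have ha : 0 < s.card := by
    refine Finset.card_pos.mpr ⟨l.proper.choose, ?_⟩
    rw [hs, Finset.mem_filter]
    exact ⟨Finset.mem_univ _, l.proper.choose_spec⟩
  have key : ∀ x : Fin (k + 1), ∑ i, (((l.idxFun i).getD x : Fin (k+1)) : ℕ) = s.card * (x : ℕ) + b := by
    intro x
    rw [← Finset.sum_add_sum_compl s]
    congr 1
    · calc ∑ i ∈ s, (((l.idxFun i).getD x : Fin (k+1)) : ℕ)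
            = ∑ _i ∈ s, (x : ℕ) := by
              refine Finset.sum_congr rfl fun i hi => ?_
              rw [hs, Finset.mem_filter] at hi
              rw [hi.2]
              rfl
        _ = s.card * (x : ℕ) := by rw [Finset.sum_const, smul_eq_mul]
    · rw [hb]
      refine Finset.sum_congr rfl fun i hi => ?_
      rw [hs, Finset.compl_filter, Finset.mem_filter] at hi
      obtain ⟨y, hy⟩ := Option.ne_none_iff_exists.mp hi.2
      rw [← hy]; rfl
  have hbnd : b ≤ Fintype.card ι * k := by
    calc b ≤ ∑ _i ∈ sᶜ, k := by
            refine Finset.sum_le_sum fun i _ => ?_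
            cases h : l.idxFun i with
            | none => simp
            | some y => simpa [h] using Nat.lt_succ_iff.mp y.isLt
      _ = sᶜ.card * k := by rw [Finset.sum_const, smul_eq_mul]
      _ ≤ Fintype.card ι * k := by
            exact Nat.mul_le_mul_right k (Finset.card_le_card (Finset.subset_univ _))
  have hcard : s.card ≤ Fintype.card ι :=
    Finset.card_le_card (Finset.subset_univ _)
  refine ⟨s.card, b, c, ha, fun x hx => ?_⟩
  constructor
  · have h1 : s.card * x ≤ Fintype.card ι * k :=
      Nat.mul_le_mul hcard (Nat.le_of_lt_succ (Nat.lt_succ_of_lt hx))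
    have h2 : s.card * x + b ≤ Fintype.card ι * k + Fintype.card ι * k :=
      Nat.add_le_add h1 hbnd
    have h3 : Fintype.card ι * k ≤ Fintype.card ι * (k + 1) :=
      Nat.mul_le_mul_left _ (by omega)
    omega
  · have h2 : C (∑ i, (((l.idxFun i).getD ⟨x, Nat.lt_succ_of_lt hx⟩ : Fin (k+1)) : ℕ)) = c :=
      hl ⟨x, Nat.lt_succ_of_lt hx⟩
    rw [key ⟨x, Nat.lt_succ_of_lt hx⟩] at h2
    exact h2

/-- The collection of non-AP subsets of ℕ is a proper ideal: closed under
subsets and finite unions, contains all finite sets, and does not contain ℕ. -/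
theorem IAP_proper_ideal :
    (∀ A B : Set ℕ, ¬ IsAPSet B → A ⊆ B → ¬ IsAPSet A) ∧
    (∀ A B : Set ℕ, ¬ IsAPSet A → ¬ IsAPSet B → ¬ IsAPSet (A ∪ B)) ∧
    (∀ A : Set ℕ, A.Finite → ¬ IsAPSet A) ∧
    IsAPSet (Set.univ : Set ℕ) := by
  have subset_closed : ∀ A B : Set ℕ, ¬ IsAPSet B → A ⊆ B → ¬ IsAPSet A := by
    intro A B hB hAB hA
    exact hB fun k => by
      obtain ⟨a, d, hd, h⟩ := hA k
      exact ⟨a, d, hd, fun i hi => hAB (h i hi)⟩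
  refine ⟨subset_closed, ?_, ?_, fun k => ⟨0, 1, one_pos, fun _ _ => trivial⟩⟩
  · -- union
    intro A B hA hB hU
    simp only [IsAPSet] at hA hB
    push_neg at hA hB
    obtain ⟨kA, hkA⟩ := hA
    obtain ⟨kB, hkB⟩ := hB
    set k := max kA kB with hk
    obtain ⟨N, hN⟩ := finite_vdw k
    obtain ⟨a0, d0, hd0, h0⟩ := hU N
    classical
    obtain ⟨a, b, c, ha, hmono⟩ := hN fun m => decide (a0 + m * d0 ∈ A)
    cases c with
    | true =>
      -- AP in A : start a0 + b*d0, difference a*d0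
      obtain ⟨i, hi, hnot⟩ := hkA (a0 + b * d0) (a * d0) (Nat.mul_pos ha hd0)
      have hik : i < k := lt_of_lt_of_le hi (le_max_left _ _)
      have hC := (hmono i hik).2
      simp only [decide_eq_true_eq] at hC
      have heq : a0 + b * d0 + i * (a * d0) = a0 + (a * i + b) * d0 := by ring
      exact hnot (heq ▸ hC)
    | false =>
      obtain ⟨i, hi, hnot⟩ := hkB (a0 + b * d0) (a * d0) (Nat.mul_pos ha hd0)
      have hik : i < k := lt_of_lt_of_le hi (le_max_right _ _)
      obtain ⟨hlt, hC⟩ := hmono i hik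
      simp only [decide_eq_false_iff_not] at hC
      have hmem : a0 + (a * i + b) * d0 ∈ A ∪ B := h0 _ hlt
      have heq : a0 + b * d0 + i * (a * d0) = a0 + (a * i + b) * d0 := by ring
      rcases hmem with h | h
      · exact absurd h hC
      · exact hnot (heq ▸ h)
  · -- finite sets
    intro A hA hAP
    obtain ⟨a, d, hd, h⟩ := hAP (hA.toFinset.card + 1)
    have hinj : Function.Injective (fun i : ℕ => a + i * d) := by
      intro i j hij
      simp only at hij
      exact Nat.eq_of_mul_eq_mul_right hd (by omega)
    have hsub : (Finset.range (hA.toFinset.card + 1)).image (fun i => a + i * d)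
        ⊆ hA.toFinset := by
      intro x hx
      simp only [Finset.mem_image, Finset.mem_range] at hx
      obtain ⟨i, hi, rfl⟩ := hx
      rw [Set.Finite.mem_toFinset]
      exact h i hi
    have := Finset.card_le_card hsub
    rw [Finset.card_image_of_injective _ hinj, Finset.card_range] at this
    omega
end

section
/- The collection I_IP of subsets of ℕ that are not IP-sets forms a proper ideal on ℕ: it is closed under subsets, closed under finite unions, and does not contain ℕ. -/
open Set Filter

/-!
Mathlib's Hindman theorem is about the sums `Hindman.FS a` along a sequence `a`, whose entries may
repeat, whereas `FS B` sums distinct elements of a set. Still, `S` is an IP-set iff `S \ {0}`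
contains `Hindman.FS a` for some sequence `a`: one way, enumerate `B \ {0}` injectively; the
other way, the sums of `a` over the consecutive blocks `[n², (n+1)²)` exceed `n`, so they form an
infinite set whose sums of distinct elements are still sums along `a`. Closure under unions is then
Hindman's theorem for the cover of `Hindman.FS a` by `A \ {0}` and `B \ {0}`.
-/

namespace Hindman

theorem mem_FS_iff {M : Type*} [AddCommMonoid M] {a : Stream' M} {m : M} :
    m ∈ FS a ↔ ∃ s : Finset ℕ, s.Nonempty ∧ ∑ i ∈ s, a.get i = m := by
  refine ⟨fun h => ?_, fun ⟨s, hs, hm⟩ => hm ▸ FS.finsetSum a s hs⟩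
  induction h with
  | head' a => exact ⟨{0}, Finset.singleton_nonempty 0, by simp [Stream'.head]⟩
  | tail' a m _ ih =>
    obtain ⟨s, hs, rfl⟩ := ih
    refine ⟨s.map (addRightEmbedding 1), hs.map, ?_⟩
    simp [Stream'.get_tail]
  | cons' a m _ ih =>
    obtain ⟨s, hs, rfl⟩ := ih
    refine ⟨insert 0 (s.map (addRightEmbedding 1)), Finset.insert_nonempty _ _, ?_⟩
    rw [Finset.sum_insert (by simp), Finset.sum_map]
    simp [Stream'.head, Stream'.get_tail]

theorem FS_blockSum_subset {M : Type*} [AddCommMonoid M] (a : Stream' M) {k : ℕ → ℕ}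
    (hk : StrictMono k) :
    FS (fun n => ∑ i ∈ Finset.Ico (k n) (k (n + 1)), a.get i : Stream' M) ⊆ FS a := by
  intro m hm
  obtain ⟨s, hs, rfl⟩ := mem_FS_iff.1 hm
  have hdisj : (s : Set ℕ).PairwiseDisjoint fun n => Finset.Ico (k n) (k (n + 1)) := by
    intro i _ j _ hij
    rw [Function.onFun, ← Finset.disjoint_coe, Finset.coe_Ico, Finset.coe_Ico]
    exact hk.monotone.pairwise_disjoint_on_Ico_succ hij
  change ∑ n ∈ s, ∑ i ∈ Finset.Ico (k n) (k (n + 1)), a.get i ∈ FS a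
  rw [← Finset.sum_biUnion hdisj]
  refine FS.finsetSum a _ ?_
  obtain ⟨n, hn⟩ := hs
  exact ⟨k n, Finset.mem_biUnion.2
    ⟨n, hn, Finset.mem_Ico.2 ⟨le_rfl, hk (Nat.lt_succ_self n)⟩⟩⟩

end Hindman

theorem FS_mono {B C : Set ℕ} (h : B ⊆ C) : FS B ⊆ FS C :=
  fun _ ⟨F, hF, hFB, hn⟩ => ⟨F, hF, hFB.trans h, hn⟩

theorem zero_notMem_FS {B : Set ℕ} (hB : 0 ∉ B) : 0 ∉ FS B := by
  rintro ⟨F, hF, hFB, h⟩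
  have := Finset.sum_pos (fun i hi => Nat.pos_of_ne_zero fun h0 => hB (h0 ▸ hFB hi)) hF
  omega

theorem FS_range_subset_hindmanFS (a : Stream' ℕ) : FS (range a.get) ⊆ Hindman.FS a := by
  rintro _ ⟨F, hF, hFa, rfl⟩
  have hinv : ∀ x ∈ F, a.get (Function.invFun a.get x) = x :=
    fun x hx => Function.invFun_eq (hFa hx)
  have hsum : ∑ x ∈ F, x = ∑ i ∈ F.image (Function.invFun a.get), a.get i := by
    rw [Finset.sum_image fun x hx y hy h => by rw [← hinv x hx, ← hinv y hy, h]]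
    exact Finset.sum_congr rfl fun x hx => (hinv x hx).symm
  exact hsum ▸ Hindman.FS.finsetSum a _ (hF.image _)

theorem hindmanFS_subset_FS_range {a : Stream' ℕ} (ha : Function.Injective a.get) :
    Hindman.FS a ⊆ FS (range a.get) := by
  intro m hm
  obtain ⟨s, hs, rfl⟩ := Hindman.mem_FS_iff.1 hm
  exact ⟨s.image a.get, hs.image _, by simp,
    (Finset.sum_image (f := id) fun _ _ _ _ h => ha h).symm⟩

theorem isIPSet_iff_exists_hindmanFS_subset {S : Set ℕ} :
    IsIPSet S ↔ ∃ a : Stream' ℕ, Hindman.FS a ⊆ S \ {0} := by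
  constructor
  · rintro ⟨B, hB, hBS⟩
    have hB' : (Set.ofPred (· ∈ B \ {0})).Infinite := hB.sdiff (finite_singleton 0)
    refine ⟨Nat.nth (· ∈ B \ {0}), fun m hm => ?_⟩
    have hm' := hindmanFS_subset_FS_range (Nat.nth_injective hB') hm
    change m ∈ FS (range (Nat.nth _)) at hm'
    rw [Nat.range_nth_of_infinite hB'] at hm'
    exact ⟨hBS (FS_mono sdiff_subset hm'), fun h0 => zero_notMem_FS (by simp) (h0 ▸ hm')⟩
  · rintro ⟨a, ha⟩
    have ha0 : ∀ i, 1 ≤ a i := fun i =>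
      Nat.one_le_iff_ne_zero.2 (ha (Hindman.FS.singleton a i)).2
    set d : Stream' ℕ := fun n => ∑ i ∈ Finset.Ico (n ^ 2) ((n + 1) ^ 2), a.get i
    have hd : ∀ n, n < d n := fun n => calc
      n < (n + 1) ^ 2 - n ^ 2 := by rw [add_sq]; omega
      _ = (Finset.Ico (n ^ 2) ((n + 1) ^ 2)).card • 1 := by simp
      _ ≤ d n := Finset.card_nsmul_le_sum _ _ _ fun i _ => ha0 i
    refine ⟨range d, infinite_of_not_bddAbove fun ⟨N, hN⟩ => (hd N).not_ge (hN ⟨N, rfl⟩),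
      (FS_range_subset_hindmanFS d).trans ?_⟩
    exact (Hindman.FS_blockSum_subset a (Nat.pow_left_strictMono two_ne_zero)).trans
      (ha.trans sdiff_subset)

theorem IsIPSet.mono {A B : Set ℕ} (hA : IsIPSet A) (h : A ⊆ B) : IsIPSet B :=
  let ⟨C, hC, hCA⟩ := hA
  ⟨C, hC, hCA.trans h⟩

theorem IsIPSet.of_union {A B : Set ℕ} (h : IsIPSet (A ∪ B)) : IsIPSet A ∨ IsIPSet B := by
  obtain ⟨a, ha⟩ := isIPSet_iff_exists_hindmanFS_subset.1 h
  obtain ⟨c, hc, b, hb⟩ := Hindman.FS_partition_regular a {A \ {0}, B \ {0}}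
    (toFinite _) (by simpa [union_sdiff_distrib] using ha)
  rcases hc with rfl | rfl
  exacts [Or.inl (isIPSet_iff_exists_hindmanFS_subset.2 ⟨b, hb⟩),
    Or.inr (isIPSet_iff_exists_hindmanFS_subset.2 ⟨b, hb⟩)]

/-- The collection of non-IP subsets of ℕ is a proper ideal: closed under
subsets and finite unions, and does not contain ℕ. -/
theorem IIP_proper_ideal :
    (∀ A B : Set ℕ, ¬ IsIPSet B → A ⊆ B → ¬ IsIPSet A) ∧
    (∀ A B : Set ℕ, ¬ IsIPSet A → ¬ IsIPSet B → ¬ IsIPSet (A ∪ B)) ∧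
    IsIPSet (Set.univ : Set ℕ) :=
  ⟨fun _ _ hB hAB hA => hB (hA.mono hAB),
    fun _ _ hA hB h => h.of_union.elim hA hB,
    ⟨univ, infinite_univ, subset_univ _⟩⟩
end

section
/- If A ⊆ ℕ is an AP-set and f : ℕ → ℕ, then there exists an AP-set C ⊆ A such that either f is constant on C, or f is finite-to-one on C and, enumerating f[C] in increasing order as x₀ < x₁ < x₂ < ..., one has (x_{n+1} - x_n) → ∞ as n → ∞. -/
/-!
If some fibre `A ∩ f⁻¹{m}` is an AP-set, take it. Otherwise, by van der Waerden, every AP-subset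
of `A` keeps an AP-subset after discarding the finitely many fibres below any bound `M`, and after
restricting to one residue class of `f` modulo `g + 1`. This yields finite blocks `B g ⊆ A`
containing a progression of length `g + 1`, with `f` constant modulo `g + 1` on `B g`, each chosen
so that on `B g` the values of `f` exceed those on `B 0, …, B (g - 1)` by more than `g`. On
`C = ⋃ B g` two distinct values of `f` coming from `B g` differ by at least `g + 1`, values from
blocks `B g`, `B h` with `g < h` differ by more than `h`, and `f > g` on `B g` makes `f`
finite-to-one.
-/

open Set Filter

open Combinatorics Finset in
theorem Combinatorics.Line.sum_apply_eq {ι : Type*} [Fintype ι] {m : ℕ}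
    (l : Line (Fin (m + 1)) ι) (x : Fin (m + 1)) :
    ∑ i, (l x i : ℕ) = ∑ i, (l 0 i : ℕ) + x * #{i | l.idxFun i = none} := by
  rw [card_filter, mul_sum, ← sum_add_distrib]
  refine sum_congr rfl fun i _ => ?_
  cases h : l.idxFun i <;> simp [h]

open Combinatorics Finset in
/-- Finitary van der Waerden: Hales–Jewett for `ι → Fin (m + 1)`, pushed forward by
`v ↦ ∑ i, v i`. -/
theorem exists_mono_ap_le (κ : Type*) [Finite κ] (m : ℕ) :
    ∃ N, ∀ c : ℕ → κ, ∃ a d : ℕ, 0 < d ∧ a + m * d ≤ N ∧ ∃ j, ∀ i ≤ m, c (a + i * d) = j := by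
  classical
  obtain ⟨ι, _, hι⟩ := Line.exists_mono_in_high_dimension (Fin (m + 1)) κ
  refine ⟨Fintype.card ι * m, fun c => ?_⟩
  obtain ⟨l, j, hl⟩ := hι fun v => c (∑ i, (v i : ℕ))
  refine ⟨∑ i, (l 0 i : ℕ), #{i | l.idxFun i = none}, card_pos.2 ?_, ?_, j, fun i hi => ?_⟩
  · obtain ⟨i, hi⟩ := l.proper
    exact ⟨i, by simpa using hi⟩
  · calc _ = ∑ i, (l (Fin.last m) i : ℕ) := by rw [l.sum_apply_eq (Fin.last m), Fin.val_last]
      _ ≤ ∑ _i : ι, m := sum_le_sum fun i _ => Fin.is_le _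
      _ = _ := by simp
  · rw [← hl ⟨i, Nat.lt_succ_of_le hi⟩]
    exact congrArg c (l.sum_apply_eq ⟨i, Nat.lt_succ_of_le hi⟩).symm

def ContainsAP (S : Set ℕ) (k : ℕ) : Prop :=
  ∃ a d : ℕ, 0 < d ∧ ∀ i < k, a + i * d ∈ S

theorem ContainsAP.mono {S T : Set ℕ} {k : ℕ} (hST : S ⊆ T) : ContainsAP S k → ContainsAP T k :=
  fun ⟨a, d, hd, h⟩ => ⟨a, d, hd, fun i hi => hST (h i hi)⟩

theorem ContainsAP.of_le {S : Set ℕ} {k l : ℕ} (hkl : k ≤ l) : ContainsAP S l → ContainsAP S k :=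
  fun ⟨a, d, hd, h⟩ => ⟨a, d, hd, fun i hi => h i (hi.trans_le hkl)⟩

theorem ContainsAP.exists_finset {S : Set ℕ} {k : ℕ} (h : ContainsAP S k) :
    ∃ Q : Finset ℕ, ↑Q ⊆ S ∧ ContainsAP Q k := by
  obtain ⟨a, d, hd, h⟩ := h
  refine ⟨(Finset.range k).image (a + · * d), ?_, a, d, hd, fun i hi => ?_⟩
  · simpa [Set.subset_def] using h
  · exact Finset.mem_image_of_mem _ (Finset.mem_range.2 hi)

theorem IsAPSet.mono {S T : Set ℕ} (hST : S ⊆ T) (hS : IsAPSet S) : IsAPSet T :=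
  fun k => ContainsAP.mono hST (hS k)

theorem isAPSet_of_infinite {S : Set ℕ} {K : Set ℕ} (hK : K.Infinite)
    (h : ∀ k ∈ K, ContainsAP S k) : IsAPSet S := fun k =>
  let ⟨l, hlK, hkl⟩ := hK.exists_gt k
  (h l hlK).of_le hkl.le

theorem IsAPSet.exists_isAPSet_inter_preimage {κ : Type*} [Finite κ] {S : Set ℕ}
    (hS : IsAPSet S) (c : ℕ → κ) : ∃ j, IsAPSet (S ∩ c ⁻¹' {j}) := by
  have hlength (k : ℕ) : ∃ j, ContainsAP (S ∩ c ⁻¹' {j}) k := by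
    obtain ⟨N, hN⟩ := exists_mono_ap_le κ k
    obtain ⟨q, e, he, hq⟩ := hS (N + 1)
    obtain ⟨a, d, hd, haN, j, hj⟩ := hN fun n => c (q + n * e)
    refine ⟨j, q + a * e, d * e, by positivity, fun i hi => ?_⟩
    have hidx : q + a * e + i * (d * e) = q + (a + i * d) * e := by ring
    have hle : a + i * d ≤ a + k * d := by gcongr
    rw [hidx]
    exact ⟨hq _ (by omega), hj i hi.le⟩
  choose J hJ using hlength
  obtain ⟨j, hj⟩ := Finite.exists_infinite_fiber J
  exact ⟨j, isAPSet_of_infinite (Set.infinite_coe_iff.1 hj) fun k hk => hk ▸ hJ k⟩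

theorem IsAPSet.inter_lt {S : Set ℕ} {f : ℕ → ℕ} (hS : IsAPSet S)
    (hfib : ∀ m, ¬ IsAPSet (S ∩ f ⁻¹' {m})) (M : ℕ) : IsAPSet (S ∩ {x | M < f x}) := by
  obtain ⟨j, hj⟩ := hS.exists_isAPSet_inter_preimage
    fun x => (⟨min (f x) (M + 1), by omega⟩ : Fin (M + 2))
  by_cases hjM : (j : ℕ) = M + 1
  · refine hj.mono fun x hx => ⟨hx.1, ?_⟩
    have := congrArg Fin.val hx.2
    simp only at this
    show M < f x
    omega
  · refine (hfib j (hj.mono fun x hx => ⟨hx.1, ?_⟩)).elim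
    have := congrArg Fin.val hx.2
    simp only at this
    show f x = j
    omega

theorem exists_finset_containsAP_modEq_lt {A : Set ℕ} {f : ℕ → ℕ} (hA : IsAPSet A)
    (hfib : ∀ m, ¬ IsAPSet (A ∩ f ⁻¹' {m})) (g M : ℕ) :
    ∃ Q : Finset ℕ, (↑Q ⊆ A ∧ ContainsAP Q (g + 1) ∧ ∀ x ∈ Q, ∀ y ∈ Q, f x ≡ f y [MOD g + 1]) ∧
      ∀ x ∈ Q, M < f x := by
  obtain ⟨r, hr⟩ := hA.exists_isAPSet_inter_preimage fun x => (f x : ZMod (g + 1))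
  have hfib' (m : ℕ) : ¬ IsAPSet (A ∩ (fun x => (f x : ZMod (g + 1))) ⁻¹' {r} ∩ f ⁻¹' {m}) :=
    fun h => hfib m (h.mono (Set.inter_subset_inter_left _ Set.inter_subset_left))
  obtain ⟨Q, hQ, hQap⟩ := ContainsAP.exists_finset (hr.inter_lt hfib' M (g + 1))
  refine ⟨Q, ⟨fun x hx => (hQ hx).1.1, hQap, fun x hx y hy => ?_⟩, fun x hx => (hQ hx).2⟩
  exact (ZMod.natCast_eq_natCast_iff _ _ _).1 ((hQ hx).1.2.trans (hQ hy).1.2.symm)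

theorem exists_separated_blocks (P : ℕ → Finset ℕ → Prop) (f : ℕ → ℕ)
    (h : ∀ g M, ∃ Q, P g Q ∧ ∀ x ∈ Q, M < f x) :
    ∃ B : ℕ → Finset ℕ, (∀ g, P g (B g)) ∧ (∀ g, ∀ x ∈ B g, g < f x) ∧
      ∀ g h, g < h → ∀ x ∈ B g, ∀ y ∈ B h, f x + h < f y := by
  choose Q hP hlt using h
  -- `bound g` bounds `f` on the blocks before `g`; block `g` is chosen above `bound g + g`.
  let bound : ℕ → ℕ := fun n => Nat.rec 0 (fun g b => max b ((Q g (b + g)).sup f)) n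
  have hmono : Monotone bound := monotone_nat_of_le_succ fun g => le_max_left _ _
  refine ⟨fun g => Q g (bound g + g), fun g => hP _ _, fun g x hx => ?_,
    fun g h hgh x hx y hy => ?_⟩
  · have := hlt _ _ x hx
    omega
  · have hx : f x ≤ bound (g + 1) := (Finset.le_sup hx).trans (le_max_right _ _)
    have := hmono (show g + 1 ≤ h from hgh)
    have := hlt _ _ y hy
    omega

theorem tendsto_nth_succ_sub_nth {X : Set ℕ} (hX : X.Infinite)
    (hgap : ∀ G, ∃ N, ∀ v ∈ X, ∀ w ∈ X, N < v → v < w → G ≤ w - v) :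
    Tendsto (fun n => Nat.nth (· ∈ X) (n + 1) - Nat.nth (· ∈ X) n) atTop atTop := by
  refine tendsto_atTop.2 fun G => ?_
  obtain ⟨N, hN⟩ := hgap G
  filter_upwards [eventually_gt_atTop N] with n hn
  exact hN _ (Nat.nth_mem_of_infinite hX n) _ (Nat.nth_mem_of_infinite hX (n + 1))
    (hn.trans_le (Nat.nth_strictMono hX).le_apply) (Nat.nth_lt_nth hX |>.2 n.lt_succ_self)

section Blocks

variable {f : ℕ → ℕ} {B : ℕ → Finset ℕ}

theorem finToOneOn_iUnion (hlt : ∀ g, ∀ x ∈ B g, g < f x) :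
    FinToOneOn f (⋃ g, (B g : Set ℕ)) := by
  intro m
  refine ((Finset.range m).finite_toSet.biUnion fun g _ => (B g).finite_toSet).subset ?_
  rintro x ⟨hx, rfl : f x = m⟩
  obtain ⟨g, hg⟩ := Set.mem_iUnion.1 hx
  exact Set.mem_biUnion (Finset.mem_range.2 (hlt g x hg)) hg

theorem image_iUnion_infinite (hne : ∀ g, (B g).Nonempty) (hlt : ∀ g, ∀ x ∈ B g, g < f x) :
    (f '' ⋃ g, (B g : Set ℕ)).Infinite := by
  refine Set.infinite_of_not_bddAbove fun ⟨u, hu⟩ => ?_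
  obtain ⟨x, hx⟩ := hne u
  have := hu ⟨x, Set.mem_iUnion.2 ⟨u, hx⟩, rfl⟩
  have := hlt u x hx
  omega

theorem image_iUnion_gaps (hmod : ∀ g, ∀ x ∈ B g, ∀ y ∈ B g, f x ≡ f y [MOD g + 1])
    (hsep : ∀ g h, g < h → ∀ x ∈ B g, ∀ y ∈ B h, f x + h < f y) (G : ℕ) :
    ∃ N, ∀ v ∈ f '' ⋃ g, (B g : Set ℕ), ∀ w ∈ f '' ⋃ g, (B g : Set ℕ),
      N < v → v < w → G ≤ w - v := by
  refine ⟨(Finset.range G).sup fun g => (B g).sup f, ?_⟩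
  rintro _ ⟨x, hx, rfl⟩ _ ⟨y, hy, rfl⟩ hN hxy
  obtain ⟨a, hxa⟩ := Set.mem_iUnion.1 hx
  obtain ⟨b, hyb⟩ := Set.mem_iUnion.1 hy
  have hGa : G ≤ a := by
    by_contra! haG
    exact hN.not_ge (Finset.le_sup_of_le (Finset.mem_range.2 haG) (Finset.le_sup hxa))
  rcases lt_trichotomy a b with hab | rfl | hba
  · have := hsep a b hab x hxa y hyb
    omega
  · have := Nat.le_of_dvd (by omega) ((Nat.modEq_iff_dvd' hxy.le).1 (hmod a x hxa y hyb))
    omega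
  · have := hsep b a hba y hyb x hxa
    omega

end Blocks

/-- Lemma 1(1)/(2): given an AP-set `A` and `f : ℕ → ℕ`, there is an AP-set
`C ⊆ A` on which `f` is constant, or on which `f` is finite-to-one and the
gaps of the increasing enumeration of `f[C]` tend to infinity. -/
theorem apSet_image_constant_or_sparse (A : Set ℕ) (hA : IsAPSet A) (f : ℕ → ℕ) :
    ∃ C : Set ℕ, C ⊆ A ∧ IsAPSet C ∧
      ((∃ m, ∀ x ∈ C, f x = m) ∨
        (FinToOneOn f C ∧
          Filter.Tendsto
            (fun n => Nat.nth (· ∈ f '' C) (n + 1) - Nat.nth (· ∈ f '' C) n)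
            Filter.atTop Filter.atTop)) := by
  by_cases hconst : ∃ m, IsAPSet (A ∩ f ⁻¹' {m})
  · obtain ⟨m, hm⟩ := hconst
    exact ⟨_, Set.inter_subset_left, hm, Or.inl ⟨m, fun x hx => hx.2⟩⟩
  push Not at hconst
  obtain ⟨B, hB, hlt, hsep⟩ :=
    exists_separated_blocks _ f (exists_finset_containsAP_modEq_lt hA hconst)
  have hne (g : ℕ) : (B g).Nonempty :=
    let ⟨a, _, _, h⟩ := (hB g).2.1
    ⟨a, by simpa using h 0 g.succ_pos⟩
  refine ⟨⋃ g, (B g : Set ℕ), Set.iUnion_subset fun g => (hB g).1,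
    fun k => ((hB k).2.1.of_le k.le_succ).mono (Set.subset_iUnion _ k),
    Or.inr ⟨finToOneOn_iUnion hlt, ?_⟩⟩
  exact tendsto_nth_succ_sub_nth (image_iUnion_infinite hne hlt)
    (image_iUnion_gaps (fun g => (hB g).2.2) hsep)
end

section
/- If A ⊆ ℕ is an AP-set and f : ℕ → ℕ, then there exists an AP-set C ⊆ A such that f[C] is not an IP-set. -/
open Set Filter

theorem finVdW (κ : Type) [Finite κ] (k : ℕ) :
    ∃ N : ℕ, ∀ C : ℕ → κ, ∃ b d : ℕ, ∃ c : κ, 0 < d ∧ (∀ i < k, b + i * d < N) ∧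
      ∀ i < k, C (b + i * d) = c := by
  by_contra h
  push_neg at h
  choose Ch hCh using h
  set U : Ultrafilter ℕ := hyperfilter ℕ with hU
  have hcol : ∀ n : ℕ, ∃ c : κ, {N | Ch N n = c} ∈ U := by
    intro n
    obtain ⟨c, hc⟩ := (U.map (fun N => Ch N n)).eq_pure_of_finite
    refine ⟨c, ?_⟩
    have : {c} ∈ U.map (fun N => Ch N n) := by rw [hc]; exact Ultrafilter.mem_pure.2 rfl
    rw [Ultrafilter.mem_map] at this
    exact this
  choose χ hχ using hcol
  obtain ⟨a, ha, b, c, hmono⟩ := Combinatorics.exists_mono_homothetic_copy (Finset.range k) χ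
  have hT : {N | ∀ i ∈ Finset.range k, Ch N (b + i * a) = χ (b + i * a)} ∈ U := by
    have : (⋂ i ∈ (Finset.range k : Finset ℕ), {N | Ch N (b + i * a) = χ (b + i * a)}) ∈ U :=
      (Filter.biInter_finset_mem _).2 fun i _ => hχ _
    convert this using 1
    ext N; simp
  have hbig : {N | a * (k - 1) + b < N} ∈ U := by
    have hfin : {N | ¬ (a * (k - 1) + b < N)}.Finite := by
      have : {N | ¬ (a * (k - 1) + b < N)} = Set.Iic (a * (k - 1) + b) := by
        ext N; simp
      rw [this]; exact Set.finite_Iic _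
    have := hfin.compl_mem_cofinite
    rw [compl_setOf] at this
    simp only [not_not] at this
    exact hyperfilter_le_cofinite this
  obtain ⟨N, hN1, hN2⟩ := Ultrafilter.nonempty_of_mem (inter_mem hT hbig)
  have hbound : ∀ i < k, b + i * a < N := by
    intro i hi
    have h1 : i * a ≤ (k - 1) * a := Nat.mul_le_mul_right a (by omega)
    have h2 : a * (k - 1) = (k - 1) * a := Nat.mul_comm _ _
    simp only [mem_setOf_eq] at hN2
    omega
  obtain ⟨i, hik, hne⟩ := hCh N b a c ha hbound
  apply hne
  have h1 : Ch N (b + i * a) = χ (b + i * a) := hN1 i (Finset.mem_range.2 hik)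
  have h2 : χ (a • i + b) = c := hmono i (Finset.mem_range.2 hik)
  rw [h1, ← h2]
  congr 1
  simp [smul_eq_mul]; ring

theorem existsBlock (A : Set ℕ) (f : ℕ → ℕ) (hA : IsAPSet A)
    (hc : ∀ v : ℕ, ¬ IsAPSet (A ∩ f ⁻¹' {v})) (k : ℕ) (V : Finset ℕ) :
    ∃ a d : ℕ, 0 < d ∧ (∀ i < k, a + i * d ∈ A) ∧
      (∀ i < k, 2 * V.sup id < f (a + i * d)) ∧
      (∀ i < k, ∀ j < k, ∀ v ∈ V, v ≠ 0 → f (a + i * d) ≠ f (a + j * d) + v) := by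
  classical
  set M := V.sup id with hM
  set p := M + 1 with hp
  set R := 2 * M + 2 + p with hR
  -- the coloring function on values
  have collt : ∀ m : ℕ, (if m ≤ 2 * M then m else 2 * M + 1 + m % p) < R := by
    intro m
    split
    · omega
    · have := Nat.mod_lt m (show 0 < p by omega)
      omega
  set colFn : ℕ → Fin R := fun m => ⟨if m ≤ 2 * M then m else 2 * M + 1 + m % p, collt m⟩
    with hcolFn
  -- bad lengths for each small value
  have hkv : ∀ v : ℕ, ∃ kv : ℕ, ∀ a d : ℕ, 0 < d → ∃ i < kv, a + i * d ∉ A ∩ f ⁻¹' {v} := by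
    intro v
    have := hc v
    unfold IsAPSet at this
    push_neg at this
    obtain ⟨kv, hkv⟩ := this
    exact ⟨kv, fun a d hd => by
      obtain ⟨i, h1, h2⟩ := hkv a d hd
      exact ⟨i, h1, h2⟩⟩
  choose kv hkv using hkv
  set K := max (k + 1) ((Finset.range (2 * M + 1)).sup kv) with hK
  obtain ⟨N, hN⟩ := finVdW (Fin R) K
  obtain ⟨a0, d0, hd0, hA0⟩ := hA N
  obtain ⟨b, d', c, hd', hbound, hmono⟩ := hN (fun i => colFn (f (a0 + i * d0)))
  set a := a0 + b * d0 with ha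
  set dd := d' * d0 with hdd
  have hpt : ∀ i, a + i * dd = a0 + (b + i * d') * d0 := by intro i; ring
  have hmem : ∀ i < K, a + i * dd ∈ A := by
    intro i hi
    rw [hpt]
    exact hA0 _ (hbound i hi)
  have hcol : ∀ i < K, colFn (f (a + i * dd)) = c := by
    intro i hi
    rw [hpt]
    exact hmono i hi
  have hddpos : 0 < dd := Nat.mul_pos hd' hd0
  by_cases hcc : (c : ℕ) ≤ 2 * M
  · -- constant small value: contradiction with hkv
    exfalso
    have hval : ∀ i < K, f (a + i * dd) = (c : ℕ) := by
      intro i hi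
      have := congrArg (Fin.val) (hcol i hi)
      simp only [hcolFn] at this
      by_cases hle : f (a + i * dd) ≤ 2 * M
      · rw [if_pos hle] at this; exact this
      · rw [if_neg hle] at this; omega
    have hcK : kv (c : ℕ) ≤ K := by
      have : (c : ℕ) ∈ Finset.range (2 * M + 1) := Finset.mem_range.2 (by omega)
      exact le_trans (Finset.le_sup this) (le_max_right _ _)
    obtain ⟨i, hi, hni⟩ := hkv (c : ℕ) a dd hddpos
    exact hni ⟨hmem i (lt_of_lt_of_le hi hcK), hval i (lt_of_lt_of_le hi hcK)⟩
  · -- big values, congruent mod p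
    push_neg at hcc
    have hbig : ∀ i < K, 2 * M < f (a + i * dd) ∧ f (a + i * dd) % p = (c : ℕ) - (2 * M + 1) := by
      intro i hi
      have := congrArg (Fin.val) (hcol i hi)
      simp only [hcolFn] at this
      by_cases hle : f (a + i * dd) ≤ 2 * M
      · rw [if_pos hle] at this; omega
      · rw [if_neg hle] at this
        exact ⟨by omega, by omega⟩
    refine ⟨a, dd, hddpos, fun i hi => hmem i (by omega), fun i hi => (hbig i (by omega)).1,
      ?_⟩
    intro i hi j hj v hv hv0 heq
    have h1 := (hbig i (by omega)).2
    have h2 := (hbig j (by omega)).2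
    have hmod : f (a + j * dd) % p = f (a + i * dd) % p := by omega
    have hle : f (a + j * dd) ≤ f (a + i * dd) := by omega
    have hdvd : p ∣ f (a + i * dd) - f (a + j * dd) := (Nat.modEq_iff_dvd' hle).1 hmod
    have hsub : f (a + i * dd) - f (a + j * dd) = v := by omega
    rw [hsub] at hdvd
    have hvM : v ≤ M := Finset.le_sup (f := id) hv
    have : p ≤ v := Nat.le_of_dvd (Nat.pos_of_ne_zero hv0) hdvd
    omega

theorem mem_FS_self {B : Set ℕ} {b : ℕ} (hb : b ∈ B) : b ∈ FS B :=
  ⟨{b}, Finset.singleton_nonempty b, by simpa using hb, by simp⟩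

theorem not_IP_of_pairs (S : Set ℕ)
    (h : ∀ v ∈ S, v ≠ 0 → {x | x ∈ S ∧ x + v ∈ S}.Finite) : ¬ IsIPSet S := by
  rintro ⟨B, hB, hFS⟩
  have hBS : B ⊆ S := fun b hb => hFS (mem_FS_self hb)
  obtain ⟨v, hvB, hv0⟩ : ∃ v, v ∈ B ∧ v ≠ 0 := by
    obtain ⟨v, hv1, hv2⟩ := (hB.diff (Set.finite_singleton 0)).nonempty
    exact ⟨v, hv1, by simpa using hv2⟩
  have hsub : B \ {v, 0} ⊆ {x | x ∈ S ∧ x + v ∈ S} := by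
    intro x hx
    obtain ⟨hxB, hxn⟩ := hx
    simp only [Set.mem_insert_iff, Set.mem_singleton_iff, not_or] at hxn
    refine ⟨hBS hxB, hFS ⟨{x, v}, ⟨x, by simp⟩, ?_, ?_⟩⟩
    · intro y hy
      simp only [Finset.coe_insert, Finset.coe_singleton, Set.mem_insert_iff,
        Set.mem_singleton_iff] at hy
      rcases hy with h | h <;> subst h <;> assumption
    · rw [Finset.sum_pair hxn.1]
  exact ((hB.diff ((Set.finite_singleton 0).insert v)).mono hsub)
    (h v (hBS hvB) hv0)

/-- Lemma 1: for every AP-set `A` and `f : ℕ → ℕ` there is an AP-set `C ⊆ A`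
with `f[C]` not an IP-set. -/
theorem apSet_image_not_IP (A : Set ℕ) (hA : IsAPSet A) (f : ℕ → ℕ) :
    ∃ C : Set ℕ, C ⊆ A ∧ IsAPSet C ∧ ¬ IsIPSet (f '' C) := by
  classical
  by_cases hcase : ∃ v : ℕ, IsAPSet (A ∩ f ⁻¹' {v})
  · obtain ⟨v, hv⟩ := hcase
    refine ⟨A ∩ f ⁻¹' {v}, Set.inter_subset_left, hv, ?_⟩
    rintro ⟨B, hB, hFS⟩
    have : B ⊆ {v} := by
      intro b hb
      have := hFS (mem_FS_self hb)
      obtain ⟨x, hx, hfx⟩ := this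
      have : f x = v := hx.2
      simp [← hfx, this]
    exact hB ((Set.finite_singleton v).subset this)
  · push_neg at hcase
    -- pick function for blocks
    have EB : ∀ (m : ℕ) (V : Finset ℕ), ∃ ad : ℕ × ℕ, 0 < ad.2 ∧
        (∀ i < m, ad.1 + i * ad.2 ∈ A) ∧
        (∀ i < m, 2 * V.sup id < f (ad.1 + i * ad.2)) ∧
        (∀ i < m, ∀ j < m, ∀ v ∈ V, v ≠ 0 →
          f (ad.1 + i * ad.2) ≠ f (ad.1 + j * ad.2) + v) := by
      intro m V
      obtain ⟨a, d, h1, h2, h3, h4⟩ := existsBlock A f hA hcase m V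
      exact ⟨(a, d), h1, h2, h3, h4⟩
    choose pick hpick using EB
    -- accumulated value sets
    set T : ℕ → Finset ℕ := fun n => Nat.rec ∅
      (fun m Vm => Vm ∪ (Finset.range (m + 1)).image
        (fun i => f ((pick (m + 1) Vm).1 + i * (pick (m + 1) Vm).2))) n with hT
    have hTsucc : ∀ m, T (m + 1) = T m ∪ (Finset.range (m + 1)).image
        (fun i => f ((pick (m + 1) (T m)).1 + i * (pick (m + 1) (T m)).2)) := fun m => rfl
    set bl : ℕ → ℕ × ℕ := fun m => pick (m + 1) (T m) with hbl
    set P : ℕ → Set ℕ := fun m => {n | ∃ i < m + 1, n = (bl m).1 + i * (bl m).2} with hP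
    set C : Set ℕ := ⋃ m, P m with hC
    have hspec := fun m => hpick (m + 1) (T m)
    have hTmono : ∀ {m n : ℕ}, m ≤ n → T m ⊆ T n := by
      intro m n hmn
      induction n with
      | zero => simp_all
      | succ n ih =>
        rcases Nat.lt_or_ge m (n + 1) with h | h
        · exact (ih (by omega)).trans (by rw [hTsucc]; exact Finset.subset_union_left)
        · have : m = n + 1 := by omega
          subst this; exact subset_rfl
    set Ms : ℕ → ℕ := fun m => (T m).sup id with hMs
    have hMsmono : ∀ m n : ℕ, m ≤ n → Ms m ≤ Ms n := fun _ _ hmn =>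
      Finset.sup_mono (hTmono hmn)
    -- f values of block m land in T (m+1)
    have hval : ∀ m x, x ∈ P m → f x ∈ T (m + 1) := by
      intro m x hx
      obtain ⟨i, hi, rfl⟩ := hx
      rw [hTsucc]
      exact Finset.mem_union_right _ (Finset.mem_image.2 ⟨i, Finset.mem_range.2 hi, rfl⟩)
    have hvalle : ∀ m x, x ∈ P m → f x ≤ Ms (m + 1) := fun m x hx =>
      Finset.le_sup (f := id) (hval m x hx)
    have hbig : ∀ m x, x ∈ P m → 2 * Ms m < f x := by
      intro m x hx
      obtain ⟨i, hi, rfl⟩ := hx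
      exact (hspec m).2.2.1 i hi
    refine ⟨C, ?_, ?_, ?_⟩
    · -- C ⊆ A
      rintro x hx
      obtain ⟨m, hm⟩ := Set.mem_iUnion.1 hx
      obtain ⟨i, hi, rfl⟩ := hm
      exact (hspec m).2.1 i hi
    · -- AP-set
      intro k
      refine ⟨(bl k).1, (bl k).2, (hspec k).1, fun i hi => ?_⟩
      exact Set.mem_iUnion.2 ⟨k, ⟨i, by omega, rfl⟩⟩
    · -- not IP
      apply not_IP_of_pairs
      intro v hv hv0
      obtain ⟨n, hn, hfn⟩ := hv
      obtain ⟨j, hj⟩ := Set.mem_iUnion.1 hn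
      have hvT : v ∈ T (j + 1) := by rw [← hfn]; exact hval j n hj
      have hvle : v ≤ Ms (j + 1) := Finset.le_sup (f := id) hvT
      apply (Set.finite_Iic (Ms (j + 1))).subset
      rintro x ⟨hxS, hxvS⟩
      by_contra hxbig
      simp only [Set.mem_Iic, not_le] at hxbig
      obtain ⟨nx, hnx, hfnx⟩ := hxS
      obtain ⟨k, hk⟩ := Set.mem_iUnion.1 hnx
      obtain ⟨ny, hny, hfny⟩ := hxvS
      obtain ⟨k', hk'⟩ := Set.mem_iUnion.1 hny
      subst hfnx
      have hxle : f nx ≤ Ms (k + 1) := hvalle k nx hk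
      have hxgt : 2 * Ms k < f nx := hbig k nx hk
      have hygt : 2 * Ms k' < f ny := hbig k' ny hk'
      have hyle : f ny ≤ Ms (k' + 1) := hvalle k' ny hk'
      -- j + 1 ≤ k
      have hjk : j + 1 ≤ k := by
        by_contra hcon
        have : Ms (k + 1) ≤ Ms (j + 1) := hMsmono (k + 1) (j + 1) (by omega)
        omega
      -- k' = k
      have hkk : k' = k := by
        rcases Nat.lt_trichotomy k' k with h | h | h
        · exfalso
          have h1 : Ms (k' + 1) ≤ Ms k := hMsmono (k' + 1) k (by omega)
          omega
        · exact h
        · exfalso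
          have h1 : Ms (k + 1) ≤ Ms k' := hMsmono (k + 1) k' (by omega)
          have h2 : Ms (j + 1) ≤ Ms (k + 1) := hMsmono (j + 1) (k + 1) (by omega)
          omega
      subst hkk
      obtain ⟨i1, hi1, he1⟩ := hk
      obtain ⟨i2, hi2, he2⟩ := hk'
      have hvTk : v ∈ T k' := hTmono hjk hvT
      exact (hspec k').2.2.2 i2 hi2 i1 hi1 v hvTk hv0
        (by rw [← he2, ← he1, hfny])
end

section
/- If A ⊆ ℕ is an AP-set and f : ℕ → ℕ, and for every AP-set C ⊆ A the image f[C] has more than one element, then there exists an AP-set C ⊆ A on which f is finite-to-one. -/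
open Set Filter

/-- Finitary van der Waerden, derived from the infinitary version by compactness. -/
lemma vdw_finitary_s7 (r L : ℕ) :
    ∃ N : ℕ, ∀ χ : ℕ → Fin (r + 1), ∃ a d : ℕ, ∃ c : Fin (r + 1),
      0 < d ∧ (∀ i < L, a + i * d < N) ∧ ∀ i < L, χ (a + i * d) = c := by
  by_contra hN
  push_neg at hN
  choose χs hχs using hN
  set U : Ultrafilter ℕ := Filter.hyperfilter ℕ with hU
  -- a limiting coloring along the ultrafilter
  have hx : ∀ x : ℕ, ∃ c : Fin (r + 1), {N | χs N x = c} ∈ U := by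
    intro x
    have hunion : (⋃ c ∈ (Set.univ : Set (Fin (r + 1))), {N | χs N x = c}) ∈ U := by
      have : (⋃ c ∈ (Set.univ : Set (Fin (r + 1))), {N | χs N x = c}) = Set.univ := by
        ext N; simp
      rw [this]; exact Filter.univ_mem
    obtain ⟨c, -, hc⟩ := (Ultrafilter.finite_biUnion_mem_iff Set.finite_univ).mp hunion
    exact ⟨c, hc⟩
  choose χ hχ using hx
  obtain ⟨a, ha, b, c, hmono⟩ :=
    Combinatorics.exists_mono_homothetic_copy (Finset.range L) χ
  -- the set of N where χs N agrees with χ on our progression, and N is big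
  have hmem : ({N | ∀ i ∈ Finset.range L, χs N (b + i * a) = c} ∩ Set.Ioi (b + L * a)) ∈ U := by
    apply Filter.inter_mem
    · have : {N | ∀ i ∈ Finset.range L, χs N (b + i * a) = c}
          = ⋂ i ∈ Finset.range L, {N | χs N (b + i * a) = c} := by
        ext N; simp
      rw [this]
      apply Filter.biInter_finset_mem _ |>.mpr
      intro i hi
      have h1 : χ (b + i * a) = c := by
        have := hmono i hi
        simpa [smul_eq_mul, Nat.mul_comm, Nat.add_comm] using this
      have := hχ (b + i * a)
      rwa [h1] at this
    · apply Filter.mem_hyperfilter_of_finite_compl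
      rw [Set.compl_Ioi]
      exact Set.finite_Iic _
  obtain ⟨N, hNmono, hNbig⟩ := Filter.nonempty_of_mem hmem
  have hbound : ∀ i < L, b + i * a < N := by
    intro i hi
    calc b + i * a ≤ b + L * a := by
          have : i * a ≤ L * a := Nat.mul_le_mul_right a hi.le
          omega
      _ < N := hNbig
  obtain ⟨i, hiL, hne⟩ := hχs N b a c ha hbound
  exact hne (hNmono i (Finset.mem_range.mpr hiL))

/-- If the image of every AP-subset of `A` under `f` has more than one element,
then `f` is finite-to-one on some AP-subset of `A`. -/
theorem finToOne_on_apSubset (A : Set ℕ) (hA : IsAPSet A) (f : ℕ → ℕ)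
    (h : ∀ C : Set ℕ, C ⊆ A → IsAPSet C → ¬ (f '' C).Subsingleton) :
    ∃ C : Set ℕ, C ⊆ A ∧ IsAPSet C ∧ FinToOneOn f C := by
  classical
  -- Step 1: no fiber of `f` over `A` is an AP-set
  have key : ∀ m : ℕ, ¬ IsAPSet (A ∩ f ⁻¹' {m}) := by
    intro m hm
    refine h _ Set.inter_subset_left hm ?_
    rintro y ⟨x, ⟨-, hx⟩, rfl⟩ z ⟨x', ⟨-, hx'⟩, rfl⟩
    simp only [Set.mem_preimage, Set.mem_singleton_iff] at hx hx'
    rw [hx, hx']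
  have key' : ∀ m : ℕ, ∃ kk : ℕ, ∀ a d : ℕ, 0 < d →
      ∃ i < kk, a + i * d ∉ (A ∩ f ⁻¹' {m}) := by
    intro m
    have hm := key m
    unfold IsAPSet at hm
    push_neg at hm
    exact hm
  choose k hk using key'
  -- Step 2: for each n, an AP of length n in A on which f ≥ n
  have build : ∀ n : ℕ, ∃ b e : ℕ, 0 < e ∧
      ∀ i < n, (b + i * e ∈ A ∧ n ≤ f (b + i * e)) := by
    intro n
    set L : ℕ := n ⊔ (Finset.range n).sup k with hL
    have hLn : n ≤ L := le_sup_left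
    have hLk : ∀ m < n, k m ≤ L := fun m hm =>
      le_trans (Finset.le_sup (Finset.mem_range.mpr hm)) le_sup_right
    set χ : ℕ → Fin (n + 1) := fun x =>
      if hx : x ∈ A ∧ f x < n then ⟨f x, by omega⟩ else ⟨n, by omega⟩ with hχdef
    obtain ⟨N, hN⟩ := vdw_finitary_s7 n L
    obtain ⟨a0, d0, hd0, hAP⟩ := hA N
    obtain ⟨a, d, c, hd, hlt, hmono⟩ := hN (fun j => χ (a0 + j * d0))
    set b : ℕ := a0 + a * d0 with hb
    set e : ℕ := d * d0 with he
    have heq : ∀ i : ℕ, a0 + (a + i * d) * d0 = b + i * e := by intro i; rw [hb, he]; ring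
    have hpt : ∀ i < L, b + i * e ∈ A := by
      intro i hi
      rw [← heq i]
      exact hAP _ (hlt i hi)
    have hcol : ∀ i < L, χ (b + i * e) = c := by
      intro i hi
      rw [← heq i]
      exact hmono i hi
    have hepos : 0 < e := Nat.mul_pos hd hd0
    by_cases hc : (c : ℕ) < n
    · -- impossible: would give a long AP in a fiber
      exfalso
      obtain ⟨i, hik, hnot⟩ := hk (c : ℕ) b e hepos
      have hiL : i < L := lt_of_lt_of_le hik (hLk _ hc)
      apply hnot
      have hcx := hcol i hiL
      rw [hχdef] at hcx
      by_cases hx : b + i * e ∈ A ∧ f (b + i * e) < n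
      · simp only [hx, dif_pos] at hcx
        have : f (b + i * e) = (c : ℕ) := congrArg Fin.val hcx
        exact ⟨hx.1, by simp [this]⟩
      · simp only [hx, dif_neg, not_false_iff] at hcx
        have : n = (c : ℕ) := congrArg Fin.val hcx
        omega
    · -- c = n : on the progression f ≥ n
      refine ⟨b, e, hepos, fun i hi => ?_⟩
      have hiL : i < L := lt_of_lt_of_le hi hLn
      have hxA := hpt i hiL
      refine ⟨hxA, ?_⟩
      have hcx := hcol i hiL
      rw [hχdef] at hcx
      by_cases hx : b + i * e ∈ A ∧ f (b + i * e) < n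
      · simp only [hx, dif_pos] at hcx
        have : f (b + i * e) = (c : ℕ) := congrArg Fin.val hcx
        omega
      · push_neg at hx
        exact hx hxA
  choose b e hbe using build
  -- Step 3: assemble
  refine ⟨{x | ∃ n, ∃ i < n, x = b n + i * e n}, ?_, ?_, ?_⟩
  · rintro x ⟨n, i, hi, rfl⟩
    exact ((hbe n).2 i hi).1
  · intro kk
    exact ⟨b kk, e kk, (hbe kk).1, fun i hi => ⟨kk, i, hi, rfl⟩⟩
  · intro m
    apply Set.Finite.subset
      (Set.Finite.biUnion (Set.finite_Iic m)
        (fun n _ => (Set.finite_Iio n).image (fun i => b n + i * e n)))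
    rintro x ⟨⟨n, i, hi, rfl⟩, hfx⟩
    simp only [Set.mem_preimage, Set.mem_singleton_iff] at hfx
    have hn : n ≤ m := le_trans ((hbe n).2 i hi).2 (le_of_eq hfx)
    exact Set.mem_biUnion hn ⟨i, hi, rfl⟩
end

section
/- Let 𝒜 be a maximal almost disjoint family of infinite subsets of ℕ with every A ∈ 𝒜 not an IP-set. Let X be the one-point compactification of the Ψ-space Y built from 𝒜 (with points p_A for A ∈ 𝒜 and point at infinity p). Then X is not a Hindman space: the sequence (n)_{n∈ℕ} in X has no IP-converging subsequence; i.e., there is no infinite B ⊆ ℕ and q ∈ X such that for every neighborhood U of q, FS(B \ {0,...,n₀-1}) ⊆ U for some n₀. -/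
open Set Filter

/-- The underlying set of the Mrówka–Isbell Ψ-space over a family `𝒜`:
the natural numbers together with a point `p_A` for each `A ∈ 𝒜`. -/
abbrev PsiSpace (𝒜 : Set (Set ℕ)) : Type := ℕ ⊕ ↥𝒜

/-- The Ψ-space topology: `Z` is open iff for every `p_A ∈ Z`, `A \ Z` is finite.
(In particular each natural number is isolated.) -/
instance psiTopology (𝒜 : Set (Set ℕ)) : TopologicalSpace (PsiSpace 𝒜) where
  IsOpen Z := ∀ A : ↥𝒜, Sum.inr A ∈ Z → ((A : Set ℕ) \ {n | Sum.inl n ∈ Z}).Finite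
  isOpen_univ := by intro A _; simp
  isOpen_inter := by
    intro s t hs ht A hA
    refine ((hs A hA.1).union (ht A hA.2)).subset ?_
    intro x hx
    by_cases h : Sum.inl x ∈ s <;> simp_all [Set.mem_diff]
  isOpen_sUnion := by
    intro S hS A hA
    obtain ⟨Z, hZ, hAZ⟩ := hA
    exact ((hS Z hZ) A hAZ).subset fun x hx => ⟨hx.1, fun h => hx.2 ⟨Z, hZ, h⟩⟩

lemma mem_FS_of_mem {B : Set ℕ} {m : ℕ} (hm : m ∈ B) : m ∈ FS B :=
  ⟨{m}, Finset.singleton_nonempty m, by simpa using hm, by simp⟩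

lemma infinite_tail {B : Set ℕ} (hB : B.Infinite) (n₀ : ℕ) :
    (B \ {k | k < n₀}).Infinite := by
  have : {k | k < n₀} = Set.Iio n₀ := rfl
  rw [this]
  exact hB.diff (Set.finite_Iio n₀)

/-- If `𝒜` is a MAD family all of whose members are non-IP sets, then in the
one-point compactification of the Ψ-space over `𝒜` the sequence `(n)_{n∈ℕ}`
has no IP-converging subsequence; in particular the space is not Hindman. -/
theorem onePoint_psi_not_Hindman (𝒜 : Set (Set ℕ))
    (hinf : ∀ A ∈ 𝒜, A.Infinite)
    (had : ∀ A ∈ 𝒜, ∀ B ∈ 𝒜, A ≠ B → (A ∩ B).Finite)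
    (hmad : ∀ D : Set ℕ, D.Infinite → ∃ A ∈ 𝒜, (D ∩ A).Infinite)
    (hip : ∀ A ∈ 𝒜, ¬ IsIPSet A) :
    ¬ ∃ B : Set ℕ, B.Infinite ∧ ∃ q : OnePoint (PsiSpace 𝒜),
      ∀ U ∈ nhds q, ∃ n₀ : ℕ, ∀ m ∈ FS (B \ {k | k < n₀}),
        (↑(Sum.inl m : PsiSpace 𝒜) : OnePoint (PsiSpace 𝒜)) ∈ U := by
  classical
  rintro ⟨B, hB, q, hq⟩
  obtain (_ | y) := q
  · -- q = ∞ : use a MAD witness to build a compact set meeting every tail of FS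
    obtain ⟨A, hA, hBA⟩ := hmad B hB
    set A' : ↥𝒜 := ⟨A, hA⟩ with hA'
    set K : Set (PsiSpace 𝒜) := insert (Sum.inr A') (Sum.inl '' A) with hK
    -- K is closed
    have hKclosed : IsClosed K := by
      rw [← isOpen_compl_iff]
      intro A'' hA''
      have hne : (A'' : Set ℕ) ≠ A := by
        intro h
        apply hA''
        have : A'' = A' := Subtype.ext h
        simp [hK, this]
      have : ((A'' : Set ℕ) \ {n | Sum.inl n ∈ Kᶜ}) ⊆ (A'' : Set ℕ) ∩ A := by
        intro n hn
        refine ⟨hn.1, ?_⟩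
        have := hn.2
        simp only [mem_setOf_eq, mem_compl_iff, not_not] at this
        rcases this with h | ⟨x, hx, hxe⟩
        · exact absurd h (by simp)
        · rwa [← Sum.inl.inj hxe]
      exact (had _ A''.2 _ hA hne).subset this
    -- K is compact
    have hKcompact : IsCompact K := by
      set f : ℕ → PsiSpace 𝒜 := fun n =>
        if n ∈ A then Sum.inl n else Sum.inr A' with hf
      have htend : Tendsto f cofinite (nhds (Sum.inr A')) := by
        intro Z hZ
        rw [mem_nhds_iff] at hZ
        obtain ⟨V, hVZ, hVopen, hAV⟩ := hZ
        rw [mem_map, mem_cofinite]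
        refine (hVopen A' hAV).subset ?_
        intro n hn
        simp only [mem_compl_iff, mem_preimage] at hn
        by_cases hnA : n ∈ A
        · exact ⟨hnA, fun hV => hn (hVZ (by simpa [hf, hnA] using hV))⟩
        · exact absurd (hVZ hAV) (by simpa [hf, hnA] using hn)
      have : K = insert (Sum.inr A') (Set.range f) := by
        ext x
        simp only [hK, mem_insert_iff, mem_range, mem_image]
        constructor
        · rintro (rfl | ⟨n, hn, rfl⟩)
          · exact Or.inl rfl
          · exact Or.inr ⟨n, by simp [hf, hn]⟩
        · rintro (rfl | ⟨n, rfl⟩)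
          · exact Or.inl rfl
          · by_cases hn : n ∈ A
            · exact Or.inr ⟨n, hn, by simp [hf, hn]⟩
            · exact Or.inl (by simp [hf, hn])
      rw [this]
      exact htend.isCompact_insert_range_of_cofinite
    -- the complement of coe '' K is a neighborhood of ∞
    have hU : (OnePoint.some '' K : Set (OnePoint (PsiSpace 𝒜)))ᶜ ∈ nhds (OnePoint.infty) := by
      refine (OnePoint.isOpen_compl_image_coe.2 ⟨hKclosed, hKcompact⟩).mem_nhds ?_
      exact OnePoint.infty_notMem_image_coe
    obtain ⟨n₀, hn₀⟩ := hq _ hU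
    obtain ⟨m, hm⟩ := (hBA.diff (Set.finite_Iio n₀)).nonempty
    have hmFS : m ∈ FS (B \ {k | k < n₀}) :=
      mem_FS_of_mem ⟨hm.1.1, hm.2⟩
    exact hn₀ m hmFS ⟨Sum.inl m, by simp [hK, hm.1.2], rfl⟩
  · obtain (n | A') := y
    · -- q = coe (inl n) : the singleton is open
      have hopen : IsOpen ({Sum.inl n} : Set (PsiSpace 𝒜)) := by
        intro A hA; simp at hA
      have hU : (OnePoint.some '' {Sum.inl n} : Set (OnePoint (PsiSpace 𝒜))) ∈
          nhds (↑(Sum.inl n : PsiSpace 𝒜)) :=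
        (OnePoint.isOpenEmbedding_coe.isOpenMap _ hopen).mem_nhds ⟨_, rfl, rfl⟩
      obtain ⟨n₀, hn₀⟩ := hq _ hU
      obtain ⟨m, hmB, hmgt⟩ := hB.exists_gt (max n n₀)
      have hmFS : m ∈ FS (B \ {k | k < n₀}) :=
        mem_FS_of_mem ⟨hmB, by simp; omega⟩
      have := hn₀ m hmFS
      obtain ⟨x, hx, hxe⟩ := this
      simp only [mem_singleton_iff] at hx
      subst hx
      have : (Sum.inl m : PsiSpace 𝒜) = Sum.inl n := OnePoint.coe_injective hxe.symm
      have := Sum.inl.inj this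
      omega
    · -- q = coe (inr A') : then FS of a tail lands in A', making A' an IP set
      set Z : Set (PsiSpace 𝒜) := insert (Sum.inr A') (Sum.inl '' (A' : Set ℕ)) with hZ
      have hopen : IsOpen Z := by
        intro A'' hA''
        have : A'' = A' := by
          rcases hA'' with h | ⟨x, _, hxe⟩
          · exact Sum.inr.inj h
          · exact absurd hxe (by simp)
        subst this
        have : ((A'' : Set ℕ) \ {n | Sum.inl n ∈ Z}) = ∅ := by
          ext n; simp [hZ]
        simp [this]
      have hU : (OnePoint.some '' Z : Set (OnePoint (PsiSpace 𝒜))) ∈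
          nhds (↑(Sum.inr A' : PsiSpace 𝒜)) :=
        (OnePoint.isOpenEmbedding_coe.isOpenMap _ hopen).mem_nhds
          ⟨_, by simp [hZ], rfl⟩
      obtain ⟨n₀, hn₀⟩ := hq _ hU
      refine hip _ A'.2 ⟨B \ {k | k < n₀}, infinite_tail hB n₀, ?_⟩
      intro m hm
      obtain ⟨x, hx, hxe⟩ := hn₀ m hm
      have : x = Sum.inl m := OnePoint.coe_injective hxe
      subst this
      rcases hx with h | ⟨k, hk, hke⟩
      · exact absurd h (by simp)
      · rwa [← Sum.inl.inj hke]
end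

section
/- In the one-point compactification X = Y ∪ {p} of the Ψ-space Y over an almost disjoint family 𝒜, if B ⊆ ℕ is infinite and the sequence (n)_{n∈B} has all its terms in ℕ, then (n)_{n∈B} converges to p if and only if B ∩ A is finite for every A ∈ 𝒜. -/
open Set Filter

lemma psi_kA_isOpen (𝒜 : Set (Set ℕ)) (A : ↥𝒜) :
    IsOpen (insert (Sum.inr A) (Sum.inl '' (A : Set ℕ)) : Set (PsiSpace 𝒜)) := by
  intro C hC
  have hCA : C = A := by
    rcases hC with h | h
    · exact (Sum.inr.inj h)
    · simp at h
  subst hCA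
  have : ((C : Set ℕ) \ {n | Sum.inl n ∈ insert (Sum.inr C) (Sum.inl '' (C : Set ℕ))}) = ∅ := by
    ext x; simp
  rw [this]; exact finite_empty

lemma psi_singleton_isOpen (𝒜 : Set (Set ℕ)) (m : ℕ) :
    IsOpen ({Sum.inl m} : Set (PsiSpace 𝒜)) := by
  intro C hC; simp at hC

lemma psi_kA_isCompact (𝒜 : Set (Set ℕ)) (A : ↥𝒜) :
    IsCompact (insert (Sum.inr A) (Sum.inl '' (A : Set ℕ)) : Set (PsiSpace 𝒜)) := by
  classical
  set f : ℕ → PsiSpace 𝒜 := fun n => if n ∈ (A : Set ℕ) then Sum.inl n else Sum.inr A with hf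
  have htend : Tendsto f cofinite (nhds (Sum.inr A)) := by
    rw [tendsto_nhds]
    intro Z hZ hAZ
    rw [Filter.mem_cofinite]
    refine ((hZ A hAZ).subset ?_)
    intro n hn
    simp only [mem_compl_iff, mem_preimage, hf] at hn
    by_cases h : n ∈ (A : Set ℕ)
    · simp [h] at hn; exact ⟨h, hn⟩
    · simp [h] at hn; exact absurd hAZ hn
  have hset : insert (Sum.inr A) (Set.range f) =
      insert (Sum.inr A) (Sum.inl '' (A : Set ℕ)) := by
    apply Set.Subset.antisymm
    · rintro x (rfl | ⟨n, rfl⟩)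
      · exact Or.inl rfl
      · by_cases h : n ∈ (A : Set ℕ)
        · simp only [hf, if_pos h]; exact Or.inr ⟨n, h, rfl⟩
        · simp only [hf, if_neg h]; exact Or.inl rfl
    · rintro x (rfl | ⟨n, hn, rfl⟩)
      · exact Or.inl rfl
      · exact Or.inr ⟨n, by simp [hf, hn]⟩
  rw [← hset]
  exact htend.isCompact_insert_range_of_cofinite

lemma psi_kA_isClosed (𝒜 : Set (Set ℕ))
    (had : ∀ A ∈ 𝒜, ∀ B ∈ 𝒜, A ≠ B → (A ∩ B).Finite) (A : ↥𝒜) :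
    IsClosed (insert (Sum.inr A) (Sum.inl '' (A : Set ℕ)) : Set (PsiSpace 𝒜)) := by
  rw [← isOpen_compl_iff]
  intro C hC
  have hne : (C : Set ℕ) ≠ (A : Set ℕ) := by
    intro h
    exact hC (Or.inl (by rw [show C = A from Subtype.ext h]))
  refine (had C C.2 A A.2 hne).subset ?_
  intro x hx
  refine ⟨hx.1, ?_⟩
  have hm : Sum.inl x ∈ insert (Sum.inr A) (Sum.inl '' (A : Set ℕ)) := by
    by_contra h; exact hx.2 h
  rcases hm with h | ⟨n, hn, he⟩
  · simp at h
  · rwa [show n = x from Sum.inl.inj he] at hn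

/-- In the one-point compactification of the Ψ-space over an almost disjoint
family `𝒜`, the sequence `(n)_{n∈B}` (for infinite `B ⊆ ℕ`) converges to the
point at infinity iff `B ∩ A` is finite for every `A ∈ 𝒜`. -/
theorem onePoint_psi_converges_to_infty_iff (𝒜 : Set (Set ℕ))
    (hinf : ∀ A ∈ 𝒜, A.Infinite)
    (had : ∀ A ∈ 𝒜, ∀ B ∈ 𝒜, A ≠ B → (A ∩ B).Finite)
    (B : Set ℕ) (hB : B.Infinite) :
    (∀ U ∈ nhds (OnePoint.infty : OnePoint (PsiSpace 𝒜)),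
        {n ∈ B | (↑(Sum.inl n : PsiSpace 𝒜) : OnePoint (PsiSpace 𝒜)) ∉ U}.Finite)
      ↔ ∀ A ∈ 𝒜, (B ∩ A).Finite := by
  constructor
  · intro h A hA
    set A' : ↥𝒜 := ⟨A, hA⟩
    set K : Set (PsiSpace 𝒜) := insert (Sum.inr A') (Sum.inl '' (A' : Set ℕ)) with hK
    have hU : ((↑) '' Kᶜ ∪ {OnePoint.infty} : Set (OnePoint (PsiSpace 𝒜))) ∈
        nhds (OnePoint.infty : OnePoint (PsiSpace 𝒜)) :=
      OnePoint.hasBasis_nhds_infty.mem_of_mem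
        ⟨psi_kA_isClosed 𝒜 had A', psi_kA_isCompact 𝒜 A'⟩
    refine (h _ hU).subset ?_
    intro n hn
    refine ⟨hn.1, ?_⟩
    intro hmem
    rcases hmem with ⟨x, hx, hxe⟩ | hinfty
    · rw [show x = Sum.inl n from OnePoint.coe_injective hxe] at hx
      exact hx (Or.inr ⟨n, hn.2, rfl⟩)
    · exact OnePoint.coe_ne_infty _ hinfty
  · intro h U hU
    obtain ⟨s, ⟨hsc, hsk⟩, hsub⟩ := OnePoint.hasBasis_nhds_infty.mem_iff.mp hU
    have key : {n | n ∈ B ∧ Sum.inl n ∈ s}.Finite := by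
      classical
      set V : (↥𝒜 ⊕ ℕ) → Set (PsiSpace 𝒜) := fun i =>
        Sum.elim (fun A : ↥𝒜 => insert (Sum.inr A) (Sum.inl '' (A : Set ℕ)))
          (fun m => {Sum.inl m}) i with hV
      have hVopen : ∀ i, IsOpen (V i) := by
        rintro (A | m)
        exacts [psi_kA_isOpen 𝒜 A, psi_singleton_isOpen 𝒜 m]
      have hcover : s ⊆ ⋃ i, V i := by
        rintro (n | A) _
        · exact mem_iUnion.mpr ⟨Sum.inr n, rfl⟩
        · exact mem_iUnion.mpr ⟨Sum.inl A, Or.inl rfl⟩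
      obtain ⟨t, ht⟩ := hsk.elim_finite_subcover V hVopen hcover
      have hsubt : {n | n ∈ B ∧ Sum.inl n ∈ s} ⊆ ⋃ i ∈ t, {n | n ∈ B ∧ Sum.inl n ∈ V i} := by
        intro n hn
        obtain ⟨i, hit, hiV⟩ := mem_iUnion₂.mp (ht hn.2)
        exact mem_iUnion₂.mpr ⟨i, hit, hn.1, hiV⟩
      refine (Set.Finite.biUnion t.finite_toSet ?_).subset hsubt
      rintro (A | m) _
      · refine (h A A.2).subset ?_
        intro n hn
        rcases hn.2 with he | ⟨k, hk, hke⟩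
        · simp [hV] at he
        · exact ⟨hn.1, by rwa [show k = n from Sum.inl.inj hke] at hk⟩
      · refine (Set.finite_singleton m).subset ?_
        intro n hn
        have := hn.2
        simp only [hV, Sum.elim_inr, mem_singleton_iff] at this
        exact (Sum.inl.inj this) ▸ rfl
    refine key.subset ?_
    intro n hn
    refine ⟨hn.1, ?_⟩
    by_contra hns
    exact hn.2 (hsub (Or.inl ⟨Sum.inl n, hns, rfl⟩))
end
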